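/- arXiv:0809.2774 — 5 statements merged into one kernel-verified Lean document; each statement's English description precedes it below -/
import Mathlib

section
/- Let K be a field of characteristic 0 or characteristic greater than the truncation order, and let S be a formal power series over K with S(0) = α, S'(0) = β ≠ 0, satisfying S'(x)² = G(x) · H(S(x)) where G is a power series with G(0) = β² and H a polynomial with H(α) = 1. Then the coefficient of x² in S equals (G'(0) + H'(α)·β³)/(4β). -/
open PowerSeries

lemma coeff_one_pow' {K : Type*} [Field K] (S : PowerSeries K) (n : ℕ) :
    coeff 1 (S ^ n) = n * (constantCoeff S) ^ (n - 1) * coeff 1 S := by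
  induction n with
  | zero => simp
  | succ n ih =>
    rw [pow_succ, coeff_one_mul, ih, map_pow]
    cases n with
    | zero => simp
    | succ m =>
      simp only [Nat.add_sub_cancel]
      push_cast
      ring

lemma coeff_one_aeval {K : Type*} [Field K] (S : PowerSeries K) (H : Polynomial K) :
    coeff 1 (Polynomial.aeval S H) =
      Polynomial.eval (constantCoeff S) (Polynomial.derivative H) * coeff 1 S := by
  induction H using Polynomial.induction_on' with
  | add p q hp hq => simp [hp, hq, add_mul]
  | monomial n a =>
    simp only [Polynomial.aeval_monomial, Polynomial.derivative_monomial,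
      PowerSeries.algebraMap_apply, Algebra.algebraMap_self_apply]
    rw [coeff_C_mul, coeff_one_pow']
    simp [Polynomial.eval_monomial]
    ring

/-- If `S ∈ K[[x]]` satisfies `S'² = G · (H ∘ S)` with `S(0) = α`, `S'(0) = β ≠ 0`,
`G(0) = β²` and `H(α) = 1` (with `4` invertible in `K`), then the coefficient of `x²`
in `S` equals `(G'(0) + H'(α)·β³) / (4β)`. -/
theorem coeff_two_of_ode {K : Type*} [Field K] (G S : PowerSeries K) (H : Polynomial K)
    (α β : K) (hβ : β ≠ 0) (h4 : (4 : K) ≠ 0)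
    (hH : H.eval α = 1) (hG : constantCoeff G = β ^ 2)
    (hS0 : constantCoeff S = α) (hS1 : coeff 1 S = β)
    (hode : (derivative K S) ^ 2 = G * Polynomial.aeval S H) :
    coeff 2 S = (coeff 1 G + Polynomial.eval α (Polynomial.derivative H) * β ^ 3) / (4 * β) := by
  have h := congrArg (coeff 1) hode
  rw [sq, coeff_one_mul, coeff_one_mul] at h
  have hd0 : constantCoeff (derivative K S) = β := by
    rw [← coeff_zero_eq_constantCoeff, coeff_derivative]; simpa using hS1
  have hd1 : coeff 1 (derivative K S) = coeff 2 S * 2 := by rw [coeff_derivative]; norm_num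
  have hc0 : constantCoeff (Polynomial.aeval S H) = 1 := by
    rw [Polynomial.aeval_def, Polynomial.hom_eval₂]
    simp [Polynomial.eval₂_eq_eval_map]
    rw [hS0]
    convert hH using 2
  rw [hd0, hd1, hc0, coeff_one_aeval, hS0, hS1, hG] at h
  field_simp
  linear_combination h
end

section
/- Newton iteration for square roots of power series: let K be a field of characteristic ≠ 2, A ∈ K[[x]] with A(0) = 1, and suppose V ∈ K[[x]] satisfies V² ≡ A (mod x^d) and V(0) = 1, and J satisfies V · J ≡ 1 (mod x^d). Then W := (V + J·A·(2 - V·J))/2 satisfies W² ≡ A (mod x^(2d)). -/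
open PowerSeries

/-- Newton iteration for square roots of power series: over a field `K` of characteristic `≠ 2`,
if `A(0) = 1 = V(0)`, `V² ≡ A (mod x^d)` and `V · J ≡ 1 (mod x^d)`, then
`W = (V + J·A·(2 - V·J))/2` satisfies `W² ≡ A (mod x^(2d))`. -/
theorem newton_sqrt {K : Type*} [Field K] (hchar : ringChar K ≠ 2)
    (A V J : PowerSeries K) (d : ℕ) (hd : 1 ≤ d)
    (hA : constantCoeff A = 1) (hV : constantCoeff V = 1)
    (hVA : (X : PowerSeries K) ^ d ∣ V ^ 2 - A)
    (hVJ : (X : PowerSeries K) ^ d ∣ V * J - 1) :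
    (X : PowerSeries K) ^ (2 * d) ∣
      (C (2 : K)⁻¹ * (V + J * A * (2 - V * J))) ^ 2 - A := by
  have h2 : (2 : K) ≠ 0 := Ring.two_ne_zero hchar
  have hc : (C (2 : K)⁻¹) * 2 = 1 := by
    have : (2 : PowerSeries K) = C 2 := by simp [map_ofNat]
    rw [this, ← map_mul, inv_mul_cancel₀ h2, map_one]
  set t : PowerSeries K := V + J * A * (2 - V * J) with ht
  have h4 : (4 : PowerSeries K) * (C (2 : K)⁻¹) ^ 2 = 1 := by
    linear_combination (C (2 : K)⁻¹ * 2 + 1) * hc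
  have main : 4 * V ^ 2 * ((C (2 : K)⁻¹ * t) ^ 2 - A)
      = ((V ^ 2 - A) + (V * J - 1) ^ 2 * A) ^ 2 - 4 * V ^ 2 * (V * J - 1) ^ 2 * A := by
    linear_combination (V ^ 2 * t ^ 2) * h4
  obtain ⟨e, he⟩ := hVA
  obtain ⟨u, hu⟩ := hVJ
  have hdvd : (X : PowerSeries K) ^ (2 * d) ∣ 4 * V ^ 2 * ((C (2 : K)⁻¹ * t) ^ 2 - A) := by
    refine ⟨(e + X ^ d * u ^ 2 * A) ^ 2 - 4 * V ^ 2 * u ^ 2 * A, ?_⟩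
    rw [main, he, hu]; ring
  have hu4 : IsUnit ((4 : PowerSeries K) * V ^ 2) := by
    rw [isUnit_iff_constantCoeff]
    simp only [map_mul, map_pow, hV, map_ofNat, one_pow, mul_one]
    exact isUnit_iff_ne_zero.mpr (by rw [show (4:K) = 2*2 by norm_num]; exact mul_ne_zero h2 h2)
  obtain ⟨w, hw⟩ := hu4
  obtain ⟨g, hg⟩ : ∃ g, g * (4 * V ^ 2) = 1 := ⟨↑w⁻¹, by rw [← hw]; exact w.inv_mul⟩
  calc (X : PowerSeries K) ^ (2 * d) ∣ g * (4 * V ^ 2 * ((C (2 : K)⁻¹ * t) ^ 2 - A)) :=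
        Dvd.dvd.mul_left hdvd g
    _ = (C (2 : K)⁻¹ * t) ^ 2 - A := by rw [← mul_assoc, hg, one_mul]
end

section
/- Let S_d be a power series solution modulo x^d of S'² = G·(H∘S) with S(0)=α, S'(0)=β, where β ≠ 0 and H(α) = 1. If S_{2d} = S_d + A is a solution modulo x^(2d) with x^(d+1) dividing A, then A satisfies the linear differential equation 2·S_d'·A' - G·(H'∘S_d)·A ≡ G·(H∘S_d) - (S_d')² (mod x^(2d)). -/
open PowerSeries

/-- If `S_d` solves `S'² = G·(H∘S)` modulo `x^d` with `S(0) = α`, `S'(0) = β ≠ 0`,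
`H(α) = 1`, `G(0) = β²`, and `S_d + A` solves it modulo `x^(2d)` with `x^(d+1) ∣ A`, then
`A` satisfies the linear differential equation
`2·S_d'·A' - G·(H'∘S_d)·A ≡ G·(H∘S_d) - (S_d')² (mod x^(2d))`. -/
theorem linearized_ode {K : Type*} [Field K] [CharZero K]
    (G Sd A : PowerSeries K) (H : Polynomial K) (α β : K) (d : ℕ) (hd : 0 < d)
    (hβ : β ≠ 0) (hH : H.eval α = 1) (hG : constantCoeff G = β ^ 2)
    (hS0 : constantCoeff Sd = α) (hS1 : coeff 1 Sd = β)
    (hSd : (X : PowerSeries K) ^ d ∣ (derivative K Sd) ^ 2 - G * Polynomial.aeval Sd H)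
    (hA : (X : PowerSeries K) ^ (d + 1) ∣ A)
    (hS2d : (X : PowerSeries K) ^ (2 * d) ∣
      (derivative K (Sd + A)) ^ 2 - G * Polynomial.aeval (Sd + A) H) :
    (X : PowerSeries K) ^ (2 * d) ∣
      2 * derivative K Sd * derivative K A
        - G * Polynomial.aeval Sd (Polynomial.derivative H) * A
        - (G * Polynomial.aeval Sd H - (derivative K Sd) ^ 2) := by
  obtain ⟨B, hB⟩ := hA
  -- X^d divides A'
  have hdA : (X : PowerSeries K) ^ d ∣ derivative K A := by
    rw [X_pow_dvd_iff] at *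
    intro i hi
    have h0 : coeff (i + 1) A = 0 := by
      rw [hB]
      have := (X_pow_dvd_iff (n := d + 1) (φ := (X : PowerSeries K) ^ (d + 1) * B)).mp
        ⟨B, rfl⟩ (i + 1) (by omega)
      exact this
    rw [coeff_derivative, h0, zero_mul]
  -- X^(2d) divides A'^2
  have hdA2 : (X : PowerSeries K) ^ (2 * d) ∣ (derivative K A) ^ 2 := by
    obtain ⟨C, hC⟩ := hdA
    exact ⟨C ^ 2, by rw [hC]; ring⟩
  -- X^(2d) divides A^2
  have hA2 : (X : PowerSeries K) ^ (2 * d) ∣ A ^ 2 :=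
    ⟨X ^ 2 * B ^ 2, by rw [hB]; ring⟩
  -- Taylor expansion of H at Sd
  set h : Polynomial (PowerSeries K) := H.map (algebraMap K (PowerSeries K)) with hh
  obtain ⟨k, hk⟩ := h.binomExpansion Sd A
  have h1 : ∀ x : PowerSeries K, Polynomial.aeval x H = h.eval x := fun x => by
    rw [Polynomial.aeval_def, hh, Polynomial.eval_map]
  have h2 : ∀ x : PowerSeries K,
      Polynomial.aeval x (Polynomial.derivative H) = h.derivative.eval x := fun x => by
    rw [Polynomial.aeval_def, hh, Polynomial.derivative_map, Polynomial.eval_map]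
  have e1 : Polynomial.aeval (Sd + A) H =
      Polynomial.aeval Sd H + Polynomial.aeval Sd (Polynomial.derivative H) * A + k * A ^ 2 := by
    rw [h1, h1, h2, hk]
  have key : 2 * derivative K Sd * derivative K A
        - G * Polynomial.aeval Sd (Polynomial.derivative H) * A
        - (G * Polynomial.aeval Sd H - (derivative K Sd) ^ 2)
      = ((derivative K (Sd + A)) ^ 2 - G * Polynomial.aeval (Sd + A) H)
        - (derivative K A) ^ 2 + G * (k * A ^ 2) := by
    rw [map_add, e1]; ring
  rw [key]
  exact dvd_add (dvd_sub hS2d hdA2) ((hA2.mul_left k).mul_left G)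
end

section
/- With notation as in the differential equation S'² = G·(H∘S) truncated modulo x^d (where (S_d')² ≡ G·(H∘S_d) mod x^d and the relevant series are invertible), the integrating factor J_{2d} = exp(-∫ G·(H'∘S_d)/(2 S_d') dx) satisfies J_{2d} ≡ 1/√(H∘S_d) (mod x^d), i.e., (J_{2d})² · (H∘S_d) ≡ 1 (mod x^d). -/
open PowerSeries

/-- The integrating factor `J = exp(-∫ G·(H'∘S_d)/(2 S_d') dx)`, characterized by
`J(0) = 1` and `2·S_d'·J' = -G·(H'∘S_d)·J`, satisfies `J ≡ 1/√(H∘S_d) (mod x^d)`,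
i.e. `J² · (H∘S_d) ≡ 1 (mod x^d)`, whenever `(S_d')² ≡ G·(H∘S_d) (mod x^d)` with
`S_d(0) = α`, `S_d'(0) = β ≠ 0`, `G(0) = β²` and `H(α) = 1`. -/
theorem integrating_factor {K : Type*} [Field K] [CharZero K]
    (G Sd J : PowerSeries K) (H : Polynomial K) (α β : K) (d : ℕ) (hd : 0 < d)
    (hβ : β ≠ 0) (hH : H.eval α = 1) (hG : constantCoeff G = β ^ 2)
    (hS0 : constantCoeff Sd = α) (hS1 : coeff 1 Sd = β)
    (hSd : (X : PowerSeries K) ^ d ∣ (derivative K Sd) ^ 2 - G * Polynomial.aeval Sd H)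
    (hJ0 : constantCoeff J = 1)
    (hJ : 2 * derivative K Sd * derivative K J
      = -(G * Polynomial.aeval Sd (Polynomial.derivative H)) * J) :
    (X : PowerSeries K) ^ d ∣ J ^ 2 * Polynomial.aeval Sd H - 1 := by
  set A : PowerSeries K := Polynomial.aeval Sd H with hA
  set A' : PowerSeries K := Polynomial.aeval Sd (Polynomial.derivative H) with hA'
  set F : PowerSeries K := J ^ 2 * A with hF
  -- chain rule
  have hchain : derivative K A = A' * derivative K Sd := by
    rw [hA, Derivation.comp_aeval_eq, smul_eq_mul, hA']
  -- derivative of S is a unit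
  have hSunit : IsUnit (derivative K Sd) := by
    rw [isUnit_iff_constantCoeff]
    have : constantCoeff (derivative K Sd) = β := by
      rw [← coeff_zero_eq_constantCoeff_apply, coeff_derivative]
      simpa using hS1
    rw [this]; exact hβ.isUnit
  -- key identity: S' * F' = J^2 * A' * (S'^2 - G*A)
  have hkey : derivative K Sd * derivative K F
      = J ^ 2 * A' * ((derivative K Sd) ^ 2 - G * A) := by
    have hdF : derivative K F = 2 * J * derivative K J * A + J ^ 2 * (A' * derivative K Sd) := by
      rw [hF, Derivation.leibniz, hchain, Derivation.leibniz_pow]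
      simp only [smul_eq_mul]
      push_cast
      ring
    rw [hdF]
    have h2 : derivative K Sd * (2 * J * derivative K J * A)
        = (2 * derivative K Sd * derivative K J) * (J * A) := by ring
    rw [mul_add, h2, hJ]
    ring
  -- X^d divides S' * F'
  have hdvd1 : (X : PowerSeries K) ^ d ∣ derivative K Sd * derivative K F := by
    rw [hkey]; exact Dvd.dvd.mul_left hSd _
  have hdvdF' : (X : PowerSeries K) ^ d ∣ derivative K F :=
    hSunit.dvd_mul_left.mp hdvd1
  rw [X_pow_dvd_iff] at hdvdF' ⊢
  intro n hn
  have hF0 : constantCoeff F = 1 := by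
    have : constantCoeff A = 1 := by
      rw [hA]
      have : constantCoeff (Polynomial.aeval Sd H) = Polynomial.eval α H := by
        rw [← hS0]
        simp [Polynomial.aeval_def, Polynomial.eval₂_eq_sum, Polynomial.eval_eq_sum,
          Polynomial.sum, map_sum, ← C_eq_algebraMap, constantCoeff_C]
      rw [this, hH]
    simp [hF, hJ0, this]
  cases n with
  | zero =>
    simpa [hF0] using hF0
  | succ m =>
    have hm : m < d := lt_of_le_of_lt (Nat.le_succ m) hn
    have := hdvdF' m hm
    rw [coeff_derivative] at this
    have hco : coeff (m + 1) F = 0 := by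
      rcases mul_eq_zero.mp this with h | h
      · exact h
      · exact absurd h (by exact_mod_cast Nat.succ_ne_zero m)
    simp [hco, coeff_one]
end

section
/- The differential equation S'² = G·(H∘S) with initial conditions S(0) = α, S'(0) = β (β² = G(0) ≠ 0, H(α) = 1) has a unique power series solution modulo x^μ over a field of characteristic 0 or characteristic p with μ ≤ p: any two solutions S₁, S₂ with the same initial conditions satisfy S₁ ≡ S₂ (mod x^μ). -/
open PowerSeries

/-- Uniqueness of power series solutions of `S'² = G·(H∘S)` with the initial conditions
`S(0) = α`, `S'(0) = β` (where `β² = G(0) ≠ 0` and `H(α) = 1`), over a field of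
characteristic `0` or of characteristic `p ≥ μ`: any two solutions modulo `x^(μ-1)`
agree modulo `x^μ`. -/
theorem ode_uniqueness {K : Type*} [Field K] (μ : ℕ)
    (hchar : ringChar K = 0 ∨ μ ≤ ringChar K)
    (G : PowerSeries K) (H : Polynomial K) (α β : K)
    (hH : H.eval α = 1) (hG : constantCoeff G = β ^ 2) (hβ : β ≠ 0)
    (S₁ S₂ : PowerSeries K)
    (h₁0 : constantCoeff S₁ = α) (h₁1 : coeff 1 S₁ = β)
    (h₂0 : constantCoeff S₂ = α) (h₂1 : coeff 1 S₂ = β)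
    (h₁ : (X : PowerSeries K) ^ (μ - 1) ∣ (derivative K S₁) ^ 2 - G * Polynomial.aeval S₁ H)
    (h₂ : (X : PowerSeries K) ^ (μ - 1) ∣ (derivative K S₂) ^ 2 - G * Polynomial.aeval S₂ H) :
    (X : PowerSeries K) ^ μ ∣ S₁ - S₂ := by
  -- cast of naturals below μ are nonzero
  have hcast : ∀ m : ℕ, 0 < m → m < μ → (m : K) ≠ 0 := by
    intro m hm hmμ
    rcases hchar with h0 | hp
    · have hc0 : CharP K 0 := h0 ▸ ringChar.charP K
      have : CharZero K := CharP.charP_to_charZero K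
      exact Nat.cast_ne_zero.mpr hm.ne'
    · have hc : CharP K (ringChar K) := ringChar.charP K
      intro hz
      have := (CharP.cast_eq_zero_iff K (ringChar K) m).mp hz
      have := Nat.le_of_dvd hm this
      omega
  -- divisibility of composed difference
  have hdvd : (S₁ - S₂) ∣ Polynomial.aeval S₁ H - Polynomial.aeval S₂ H := by
    have ha : ∀ S : PowerSeries K,
        Polynomial.aeval S H = (H.map (algebraMap K (PowerSeries K))).eval S := fun S => by
      rw [Polynomial.aeval_def, Polynomial.eval_map]
    rw [ha, ha]
    exact Polynomial.sub_dvd_eval_sub S₁ S₂ (H.map (algebraMap K (PowerSeries K)))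
  -- the key congruence
  have hE : (X : PowerSeries K) ^ (μ - 1) ∣
      (derivative K S₁ + derivative K S₂) * (derivative K (S₁ - S₂))
        - G * (Polynomial.aeval S₁ H - Polynomial.aeval S₂ H) := by
    have := dvd_sub h₁ h₂
    have heq : (derivative K S₁ + derivative K S₂) * (derivative K (S₁ - S₂))
        - G * (Polynomial.aeval S₁ H - Polynomial.aeval S₂ H)
        = ((derivative K S₁) ^ 2 - G * Polynomial.aeval S₁ H)
          - ((derivative K S₂) ^ 2 - G * Polynomial.aeval S₂ H) := by
      rw [map_sub]
      ring
    rw [heq]; exact this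
  have key : ∀ n, n ≤ μ → (X : PowerSeries K) ^ n ∣ S₁ - S₂ := by
    intro n
    induction n with
    | zero => intro _; simpa using (one_dvd _)
    | succ n ih =>
      intro hn
      have ihn := ih (le_of_lt hn)
      rw [X_pow_dvd_iff]
      intro m hm
      rcases Nat.lt_or_ge m n with hmn | hmn
      · exact X_pow_dvd_iff.mp ihn m hmn
      have hmn : m = n := le_antisymm (Nat.lt_succ_iff.mp hm) hmn
      subst hmn
      -- m = n; show coeff n (S₁ - S₂) = 0
      match m, hn, ihn with
      | 0, _, _ => simp [h₁0, h₂0]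
      | 1, _, _ => simp [h₁1, h₂1]
      | (n+2), hn, ihn =>
        set m := n + 2 with hm2
        -- coefficient at m - 1 of the key congruence vanishes
        have hc1 : coeff (m - 1) ((derivative K S₁ + derivative K S₂) * (derivative K (S₁ - S₂))
            - G * (Polynomial.aeval S₁ H - Polynomial.aeval S₂ H)) = 0 := by
          have hlt : m - 1 < μ - 1 := by omega
          exact X_pow_dvd_iff.mp hE (m - 1) hlt
        -- second term has coeff (m-1) zero since X^m divides it
        have hc2 : coeff (m - 1) (G * (Polynomial.aeval S₁ H - Polynomial.aeval S₂ H)) = 0 := by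
          have hd2 : (X : PowerSeries K) ^ m ∣
              G * (Polynomial.aeval S₁ H - Polynomial.aeval S₂ H) :=
            Dvd.dvd.mul_left (dvd_trans ihn hdvd) G
          exact X_pow_dvd_iff.mp hd2 (m - 1) (by omega)
        -- derivative of the difference is X^(m-1) * T
        obtain ⟨T, hT⟩ : (X : PowerSeries K) ^ (m - 1) ∣ derivative K (S₁ - S₂) := by
          rw [X_pow_dvd_iff]
          intro i hi
          rw [coeff_derivative]
          have : coeff (i + 1) (S₁ - S₂) = 0 := X_pow_dvd_iff.mp ihn (i + 1) (by omega)
          rw [this, zero_mul]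
        have hT0 : constantCoeff T = (m : K) * coeff m (S₁ - S₂) := by
          have := coeff_derivative (S₁ - S₂) (m - 1)
          rw [hT] at this
          have h1 : m - 1 + 1 = m := by omega
          have h2 : coeff (m - 1) ((X : PowerSeries K) ^ (m - 1) * T)
              = coeff 0 T := by
            simpa using coeff_X_pow_mul T (m - 1) 0
          rw [h2, h1] at this
          rw [coeff_zero_eq_constantCoeff] at this
          have h3 : ((m - 1 : ℕ) : K) + 1 = (m : K) := by
            rw [← Nat.cast_add_one, h1]
          rw [this, h3]; ring
        -- coeff (m-1) of the first product
        have hc3 : coeff (m - 1) ((derivative K S₁ + derivative K S₂) * (derivative K (S₁ - S₂)))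
            = (β + β) * ((m : K) * coeff m (S₁ - S₂)) := by
          rw [hT]
          rw [show (derivative K S₁ + derivative K S₂) * ((X : PowerSeries K) ^ (m - 1) * T)
              = (X : PowerSeries K) ^ (m - 1) *
                ((derivative K S₁ + derivative K S₂) * T) by ring]
          have := coeff_X_pow_mul ((derivative K S₁ + derivative K S₂) * T) (m - 1) 0
          simp only [zero_add] at this
          rw [this, coeff_zero_eq_constantCoeff, map_mul, map_add]
          have e1 : constantCoeff (derivative K S₁) = β := by
            rw [← coeff_zero_eq_constantCoeff, coeff_derivative]
            simpa using h₁1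
          have e2 : constantCoeff (derivative K S₂) = β := by
            rw [← coeff_zero_eq_constantCoeff, coeff_derivative]
            simpa using h₂1
          rw [e1, e2, hT0]
        rw [map_sub, hc2, sub_zero, hc3] at hc1
        have h2ne : (β + β) ≠ 0 := by
          have : ((2 : ℕ) : K) ≠ 0 := hcast 2 (by omega) (by omega)
          intro h
          apply this
          have : (2 : K) * β = 0 := by push_cast; linear_combination h
          rcases mul_eq_zero.mp this with h' | h'
          · push_cast at h' ⊢; exact h'
          · exact absurd h' hβ
        have hmne : (m : K) ≠ 0 := hcast m (by omega) (by omega)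
        have := mul_eq_zero.mp hc1
        rcases this with h' | h'
        · exact absurd h' h2ne
        · rcases mul_eq_zero.mp h' with h'' | h''
          · exact absurd h'' hmne
          · exact h''
  exact key μ le_rfl
end
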